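/- For every formula φ ∈ L_RS the following hold: (a) for every S ⊆ Act, S ∈ I(φ) if and only if there is a process p with I(p) = S and p ⊨ φ; (b) φ is unsatisfiable if and only if I(φ) = ∅. -/
import Mathlib


/-- Finite, loop-free CCS processes over the action set `Act`:
`p ::= 0 | a.p | p + p`. -/
inductive Proc (Act : Type) : Type
  | nil : Proc Act
  | pre : Act → Proc Act → Proc Act
  | plus : Proc Act → Proc Act → Proc Act

/-- The transition relation: `a.p —a→ p`, and `p₁ + p₂ —a→ p'` iff
`p₁ —a→ p'` or `p₂ —a→ p'`. -/
inductive Step {Act : Type} : Proc Act → Act → Proc Act → Prop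
  | pre (a : Act) (p : Proc Act) : Step (Proc.pre a p) a p
  | plusL : ∀ {p₁ p₂ p' : Proc Act} {a : Act},
      Step p₁ a p' → Step (Proc.plus p₁ p₂) a p'
  | plusR : ∀ {p₁ p₂ p' : Proc Act} {a : Act},
      Step p₂ a p' → Step (Proc.plus p₁ p₂) a p'

/-- HML formulas in negation normal form:
`φ ::= tt | ff | φ∧φ | φ∨φ | ⟨a⟩φ | [a]φ`. -/
inductive HML (Act : Type) : Type
  | tt : HML Act
  | ff : HML Act
  | conj : HML Act → HML Act → HML Act
  | disj : HML Act → HML Act → HML Act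
  | dia : Act → HML Act → HML Act
  | box : Act → HML Act → HML Act

/-- The satisfaction relation `p ⊨ φ`. -/
def Sat {Act : Type} : Proc Act → HML Act → Prop
  | _, HML.tt => True
  | _, HML.ff => False
  | p, HML.conj φ ψ => Sat p φ ∧ Sat p ψ
  | p, HML.disj φ ψ => Sat p φ ∨ Sat p ψ
  | p, HML.dia a φ => ∃ p', Step p a p' ∧ Sat p' φ
  | p, HML.box a φ => ∀ p', Step p a p' → Sat p' φ

/-- `φ` entails `ψ` iff every process satisfying `φ` satisfies `ψ`. -/
def Entails {Act : Type} (φ ψ : HML Act) : Prop :=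
  ∀ p : Proc Act, Sat p φ → Sat p ψ

/-- `R` is a simulation relation. -/
def IsSimulation {Act : Type} (R : Proc Act → Proc Act → Prop) : Prop :=
  ∀ p q, R p q → ∀ a p', Step p a p' → ∃ q', Step q a q' ∧ R p' q'

/-- The simulation preorder `≲_S`: the largest simulation. -/
def Sim {Act : Type} (p q : Proc Act) : Prop :=
  ∃ R, IsSimulation R ∧ R p q

/-- The set `I(p)` of initial actions of a process. -/
def initials {Act : Type} (p : Proc Act) : Set Act :=
  {a | ∃ p', Step p a p'}

/-- The fragment `L_RS`: `φ ::= tt | ff | φ∧φ | φ∨φ | ⟨a⟩φ | [a]ff`. -/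
inductive InLRS {Act : Type} : HML Act → Prop
  | tt : InLRS HML.tt
  | ff : InLRS HML.ff
  | conj : ∀ {φ ψ : HML Act}, InLRS φ → InLRS ψ → InLRS (HML.conj φ ψ)
  | disj : ∀ {φ ψ : HML Act}, InLRS φ → InLRS ψ → InLRS (HML.disj φ ψ)
  | dia : ∀ {a : Act} {φ : HML Act}, InLRS φ → InLRS (HML.dia a φ)
  | boxff : ∀ {a : Act}, InLRS (HML.box a HML.ff)

/-- The set `I(φ)` of possible initial-action sets for `φ ∈ L_RS`:
`I(tt) = 2^Act`, `I(ff) = ∅`, `I([a]ff) = {X | a ∉ X}`,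
`I(⟨a⟩φ) = ∅` if `I(φ) = ∅` and `{X | a ∈ X}` otherwise,
`I(φ₁∨φ₂) = I(φ₁) ∪ I(φ₂)`, `I(φ₁∧φ₂) = I(φ₁) ∩ I(φ₂)`. -/
def Iset {Act : Type} : HML Act → Set (Set Act)
  | HML.tt => Set.univ
  | HML.ff => ∅
  | HML.conj φ ψ => Iset φ ∩ Iset ψ
  | HML.disj φ ψ => Iset φ ∪ Iset ψ
  | HML.dia a φ => {X : Set Act | a ∈ X ∧ (Iset φ).Nonempty}
  | HML.box a _ => {X : Set Act | a ∉ X}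

section Aux
variable {Act : Type}

lemma initials_nil : initials (Proc.nil : Proc Act) = ∅ := by
  ext a; simp [initials]; intro p h; cases h

lemma initials_pre (a : Act) (p : Proc Act) : initials (Proc.pre a p) = {a} := by
  ext b; constructor
  · rintro ⟨p', h⟩; cases h; rfl
  · rintro rfl; exact ⟨p, Step.pre _ p⟩

lemma initials_plus (p q : Proc Act) :
    initials (Proc.plus p q) = initials p ∪ initials q := by
  ext b; constructor
  · rintro ⟨p', h⟩
    cases h with
    | plusL h => exact Or.inl ⟨_, h⟩
    | plusR h => exact Or.inr ⟨_, h⟩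
  · rintro (⟨p', h⟩ | ⟨p', h⟩)
    exacts [⟨p', Step.plusL h⟩, ⟨p', Step.plusR h⟩]

/-- Sum of prefixes over a list. -/
def procOf : List Act → Proc Act
  | [] => Proc.nil
  | a :: l => Proc.plus (Proc.pre a Proc.nil) (procOf l)

lemma initials_procOf (l : List Act) : initials (procOf l) = {a | a ∈ l} := by
  induction l with
  | nil => simp [procOf, initials_nil]
  | cons a l ih =>
      simp [procOf, initials_plus, initials_pre, ih]
      ext b; simp [or_comm]

lemma exists_proc_initials (S : Set Act) [Fintype Act] :
    ∃ p : Proc Act, initials p = S := by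
  classical
  refine ⟨procOf S.toFinite.toFinset.toList, ?_⟩
  rw [initials_procOf]; ext a; simp only [Set.mem_setOf_eq, Set.Finite.mem_toFinset, Finset.mem_toList]

lemma sat_plusL {φ : HML Act} (h : InLRS φ) {p q : Proc Act}
    (hp : Sat p φ) (hq : initials q ⊆ initials p) : Sat (Proc.plus p q) φ := by
  induction h with
  | tt => trivial
  | ff => exact hp.elim
  | conj h1 h2 ih1 ih2 => exact ⟨ih1 hp.1, ih2 hp.2⟩
  | disj h1 h2 ih1 ih2 =>
      cases hp with
      | inl h => exact Or.inl (ih1 h)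
      | inr h => exact Or.inr (ih2 h)
  | dia h ih =>
      obtain ⟨p', hs, hφ⟩ := hp
      exact ⟨p', Step.plusL hs, hφ⟩
  | @boxff a =>
      intro p' hs
      cases hs with
      | plusL h => exact hp _ h
      | plusR h =>
          obtain ⟨p'', hst⟩ := hq ⟨_, h⟩
          exact (show False from hp _ hst).elim

lemma sat_plusR {φ : HML Act} (h : InLRS φ) {p q : Proc Act}
    (hq : Sat q φ) (hp : initials p ⊆ initials q) : Sat (Proc.plus p q) φ := by
  induction h with
  | tt => trivial
  | ff => exact hq.elim
  | conj h1 h2 ih1 ih2 => exact ⟨ih1 hq.1, ih2 hq.2⟩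
  | disj h1 h2 ih1 ih2 =>
      cases hq with
      | inl h => exact Or.inl (ih1 h)
      | inr h => exact Or.inr (ih2 h)
  | dia h ih =>
      obtain ⟨q', hs, hφ⟩ := hq
      exact ⟨q', Step.plusR hs, hφ⟩
  | @boxff a =>
      intro p' hs
      cases hs with
      | plusL h =>
          obtain ⟨p'', hst⟩ := hp ⟨_, h⟩
          exact (show False from hq _ hst).elim
      | plusR h => exact hq _ h

end Aux

lemma Iset_main {Act : Type} [Fintype Act] {φ : HML Act} (h : InLRS φ) :
    ∀ S : Set Act, S ∈ Iset φ ↔ ∃ p : Proc Act, initials p = S ∧ Sat p φ := by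
  induction h with
  | tt =>
      intro S
      simp only [Iset, Set.mem_univ, true_iff]
      obtain ⟨p, hp⟩ := exists_proc_initials S
      exact ⟨p, hp, trivial⟩
  | ff =>
      intro S
      simp only [Iset, Set.mem_empty_iff_false, false_iff]
      rintro ⟨p, -, hp⟩; exact hp
  | @conj φ ψ h1 h2 ih1 ih2 =>
      intro S
      constructor
      · rintro ⟨hφ, hψ⟩
        obtain ⟨p₁, hp₁, hs₁⟩ := (ih1 S).mp hφ
        obtain ⟨p₂, hp₂, hs₂⟩ := (ih2 S).mp hψ
        refine ⟨Proc.plus p₁ p₂, ?_, ?_, ?_⟩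
        · rw [initials_plus, hp₁, hp₂, Set.union_self]
        · exact sat_plusL h1 hs₁ (by rw [hp₁, hp₂])
        · exact sat_plusR h2 hs₂ (by rw [hp₁, hp₂])
      · rintro ⟨p, rfl, hs₁, hs₂⟩
        exact ⟨(ih1 _).mpr ⟨p, rfl, hs₁⟩, (ih2 _).mpr ⟨p, rfl, hs₂⟩⟩
  | @disj φ ψ h1 h2 ih1 ih2 =>
      intro S
      constructor
      · rintro (hφ | hψ)
        · obtain ⟨p, hp, hs⟩ := (ih1 S).mp hφ
          exact ⟨p, hp, Or.inl hs⟩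
        · obtain ⟨p, hp, hs⟩ := (ih2 S).mp hψ
          exact ⟨p, hp, Or.inr hs⟩
      · rintro ⟨p, rfl, hs | hs⟩
        · exact Or.inl ((ih1 _).mpr ⟨p, rfl, hs⟩)
        · exact Or.inr ((ih2 _).mpr ⟨p, rfl, hs⟩)
  | @dia a φ h1 ih =>
      intro S
      constructor
      · rintro ⟨ha, X, hX⟩
        obtain ⟨q, -, hq⟩ := (ih X).mp hX
        obtain ⟨p₀, hp₀⟩ := exists_proc_initials S
        refine ⟨Proc.plus (Proc.pre a q) p₀, ?_, q, Step.plusL (Step.pre a q), hq⟩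
        rw [initials_plus, initials_pre, hp₀]
        exact Set.union_eq_self_of_subset_left (Set.singleton_subset_iff.mpr ha)
      · rintro ⟨p, rfl, p', hs, hφ⟩
        exact ⟨⟨p', hs⟩, initials p', (ih _).mpr ⟨p', rfl, hφ⟩⟩
  | @boxff a =>
      intro S
      constructor
      · intro haS
        obtain ⟨p, hp⟩ := exists_proc_initials S
        refine ⟨p, hp, fun p' hs => haS ?_⟩
        rw [← hp]; exact ⟨p', hs⟩
      · rintro ⟨p, rfl, hp⟩ ⟨p', hs⟩
        exact hp p' hs

/-- For every `φ ∈ L_RS`: (a) for every `S ⊆ Act`, `S ∈ I(φ)` iff there is a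
process `p` with `I(p) = S` and `p ⊨ φ`; (b) `φ` is unsatisfiable iff
`I(φ) = ∅`. -/
theorem Iset_spec {Act : Type} [Fintype Act] [Nonempty Act]
    (φ : HML Act) (h : InLRS φ) :
    (∀ S : Set Act, S ∈ Iset φ ↔ ∃ p : Proc Act, initials p = S ∧ Sat p φ) ∧
    ((¬ ∃ p : Proc Act, Sat p φ) ↔ Iset φ = ∅) := by
  refine ⟨Iset_main h, ?_⟩
  constructor
  · intro hns
    ext S
    simp only [Set.mem_empty_iff_false, iff_false]
    intro hS
    obtain ⟨p, -, hp⟩ := (Iset_main h S).mp hS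
    exact hns ⟨p, hp⟩
  · rintro he ⟨p, hp⟩
    have := (Iset_main h (initials p)).mpr ⟨p, rfl, hp⟩
    rw [he] at this
    exact this
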